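/- arXiv:1809.06769 — 7 statements merged into one kernel-verified Lean document; each statement's English description precedes it below -/
import Mathlib

section
/- For any prae-dilator T and any Bachmann-Howard system (X, ι_X, L_X), the relation <_{ϑ_T(X)} defined recursively on terms ϑσ (σ ∈ T_X) is antisymmetric: we never have both ϑσ < ϑτ and ϑτ < ϑσ. -/
/-! Data for a Bachmann-Howard system: `X` is a linear order, `S` is the linear order
`T_X` (the value of a prae-dilator at `X`), whose elements `σ` simultaneously index the
terms `ϑσ` making up the set `ϑ_T(X)`.  So `supp : S → Finset X` is the support function
`supp^T_X`, `ι : X → S` is the function `ι_X : X → ϑ_T(X)` (identifying terms with their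
indices), and `L : X → ℕ` is the length function `L_X`. -/
structure BHData (X S : Type) [LinearOrder X] [LinearOrder S] where
  supp : S → Finset X
  ι : X → S
  L : X → ℕ

variable {X S : Type} [LinearOrder X] [LinearOrder S]

/-- The induced length function `L_{ϑ_T(X)}(ϑσ) = max{L_X(x) | x ∈ supp σ} + 1`
(with the maximum over the empty set being `0`). -/
def BHData.Lv (D : BHData X S) (σ : S) : ℕ := (D.supp σ).sup D.L + 1

/-- `(X, ι, L)` is a Bachmann-Howard system: `L_{ϑ_T(X)} ∘ ι_X = L_X`. -/
def BHData.IsBH (D : BHData X S) : Prop := ∀ x : X, D.Lv (D.ι x) = D.L x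

/-- The recursively defined relation `ϑσ <_{ϑ_T(X)} ϑτ`: either
(i) `σ <_{T_X} τ` and `ι_X(x) < ϑτ` for all `x ∈ supp σ`, or
(ii) `τ <_{T_X} σ` and `ϑσ ≤ ι_X(x)` for some `x ∈ supp τ`
(the clause (ii) is split according to `ϑσ < ι_X(x)` or `ϑσ = ι_X(x)`).
For a Bachmann-Howard system this least fixed point satisfies the defining
recursion, which is well-founded along `Lv`. -/
inductive BHData.lt (D : BHData X S) : S → S → Prop
  | left {σ τ : S} : σ < τ → (∀ x ∈ D.supp σ, D.lt (D.ι x) τ) → D.lt σ τ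
  | right_lt {σ τ : S} (x : X) : τ < σ → x ∈ D.supp τ → D.lt σ (D.ι x) → D.lt σ τ
  | right_eq {σ τ : S} (x : X) : τ < σ → x ∈ D.supp τ → σ = D.ι x → D.lt σ τ

/-- Antisymmetry of the collapse order: for a Bachmann-Howard system we never have
both `ϑσ < ϑτ` and `ϑτ < ϑσ`. -/
theorem BHData.lt_antisymm (D : BHData X S) (hD : D.IsBH) :
    ∀ σ τ : S, ¬ (D.lt σ τ ∧ D.lt τ σ) := by
  have hlt : ∀ {σ : S} {x : X}, x ∈ D.supp σ → D.Lv (D.ι x) < D.Lv σ := by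
    intro σ x hx
    rw [hD x]
    exact Nat.lt_succ_of_le (Finset.le_sup hx)
  suffices h : ∀ n σ τ, D.Lv σ + D.Lv τ ≤ n → ¬ (D.lt σ τ ∧ D.lt τ σ) by
    intro σ τ; exact h _ σ τ le_rfl
  intro n
  induction n with
  | zero => intro σ τ hn; unfold BHData.Lv at hn; omega
  | succ n ih =>
    rintro σ τ hn ⟨h1, h2⟩
    cases h1 with
    | left hst hall =>
      cases h2 with
      | left hts _ => exact absurd hst (not_lt_of_gt hts)
      | right_lt x hst' hx hτx =>
        exact ih τ (D.ι x) (by have := hlt hx; omega) ⟨hτx, hall x hx⟩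
      | right_eq x hst' hx heq =>
        have h := hall x hx
        rw [← heq] at h
        have hm := hlt hx
        rw [← heq] at hm
        exact ih τ τ (by omega) ⟨h, h⟩
    | right_lt x hts hx hσx =>
      cases h2 with
      | left hts' hall =>
        exact ih σ (D.ι x) (by have := hlt hx; omega) ⟨hσx, hall x hx⟩
      | right_lt y h' _ _ => exact absurd hts (not_lt_of_gt h')
      | right_eq y h' _ _ => exact absurd hts (not_lt_of_gt h')
    | right_eq x hts hx heq =>
      cases h2 with
      | left hts' hall =>
        have h := hall x hx
        rw [← heq] at h
        have hm := hlt hx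
        rw [← heq] at hm
        exact ih σ σ (by omega) ⟨h, h⟩
      | right_lt y h' _ _ => exact absurd hts (not_lt_of_gt h')
      | right_eq y h' _ _ => exact absurd hts (not_lt_of_gt h')
end

section
/- For any prae-dilator T and any Bachmann-Howard system (X, ι_X, L_X), the relation <_{ϑ_T(X)} is trichotomous: for all σ, τ ∈ T_X, exactly one of ϑσ < ϑτ, ϑσ = ϑτ, ϑτ < ϑσ holds. -/
variable {X S : Type} [LinearOrder X] [LinearOrder S]

lemma BHData.not_lt_self (D : BHData X S) (σ : S) : ¬ D.lt σ σ := by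
  intro h
  cases h with
  | left h _ => exact lt_irrefl _ h
  | right_lt x h _ _ => exact lt_irrefl _ h
  | right_eq x h _ _ => exact lt_irrefl _ h

lemma BHData.Lv_lt (D : BHData X S) (hD : D.IsBH) {x : X} {σ : S} (hx : x ∈ D.supp σ) :
    D.Lv (D.ι x) < D.Lv σ := by
  rw [hD x]
  exact Nat.lt_succ_of_le (Finset.le_sup hx)

lemma BHData.asymm_aux (D : BHData X S) (hD : D.IsBH) :
    ∀ n σ τ, D.Lv σ + D.Lv τ ≤ n → D.lt σ τ → D.lt τ σ → False := by
  intro n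
  induction n using Nat.strong_induction_on with
  | _ n IH =>
    intro σ τ hn h1 h2
    cases h1 with
    | left hst H1 =>
      cases h2 with
      | left hts _ => exact absurd (hst.trans hts) (lt_irrefl _)
      | right_lt x hst' hx hlt =>
        have hLv := D.Lv_lt hD hx
        exact IH (D.Lv (D.ι x) + D.Lv τ) (by omega) _ _ le_rfl (H1 x hx) hlt
      | right_eq x hst' hx heq =>
        have := H1 x hx
        rw [← heq] at this
        exact D.not_lt_self τ this
    | right_lt x hts hx hlt =>
      cases h2 with
      | left hst H2 =>
        have hLv := D.Lv_lt hD hx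
        exact IH (D.Lv σ + D.Lv (D.ι x)) (by omega) _ _ le_rfl hlt (H2 x hx)
      | right_lt y hst _ _ => exact absurd (hst.trans hts) (lt_irrefl _)
      | right_eq y hst _ _ => exact absurd (hst.trans hts) (lt_irrefl _)
    | right_eq x hts hx heq =>
      cases h2 with
      | left hst H2 =>
        have := H2 x hx
        rw [← heq] at this
        exact D.not_lt_self σ this
      | right_lt y hst _ _ => exact absurd (hst.trans hts) (lt_irrefl _)
      | right_eq y hst _ _ => exact absurd (hst.trans hts) (lt_irrefl _)

lemma BHData.total_aux (D : BHData X S) (hD : D.IsBH) :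
    ∀ n σ τ, D.Lv σ + D.Lv τ ≤ n → σ < τ → D.lt σ τ ∨ D.lt τ σ := by
  intro n
  induction n using Nat.strong_induction_on with
  | _ n IH =>
    intro σ τ hn hst
    by_cases H : ∀ x ∈ D.supp σ, D.lt (D.ι x) τ
    · exact Or.inl (.left hst H)
    · push_neg at H
      obtain ⟨x, hx, hnx⟩ := H
      have hLv := D.Lv_lt hD hx
      rcases lt_trichotomy (D.ι x) τ with h | h | h
      · rcases IH (D.Lv (D.ι x) + D.Lv τ) (by omega) _ _ le_rfl h with h' | h'
        · exact absurd h' hnx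
        · exact Or.inr (.right_lt x hst hx h')
      · exact Or.inr (.right_eq x hst hx h.symm)
      · rcases IH (D.Lv τ + D.Lv (D.ι x)) (by omega) _ _ le_rfl h with h' | h'
        · exact Or.inr (.right_lt x hst hx h')
        · exact absurd h' hnx

/-- Trichotomy for the collapse order of a Bachmann-Howard system: exactly one of
`ϑσ < ϑτ`, `ϑσ = ϑτ`, `ϑτ < ϑσ` holds. -/
theorem BHData.lt_trichotomy (D : BHData X S) (hD : D.IsBH) :
    ∀ σ τ : S, (D.lt σ τ ∨ σ = τ ∨ D.lt τ σ) ∧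
      (D.lt σ τ → σ ≠ τ) ∧ (σ = τ → ¬ D.lt τ σ) ∧ ¬ (D.lt σ τ ∧ D.lt τ σ) := by
  intro σ τ
  have asym : ¬ (D.lt σ τ ∧ D.lt τ σ) := fun ⟨h1, h2⟩ =>
    D.asymm_aux hD (D.Lv σ + D.Lv τ) σ τ le_rfl h1 h2
  refine ⟨?_, ?_, ?_, asym⟩
  · rcases _root_.lt_trichotomy σ τ with h | h | h
    · rcases D.total_aux hD (D.Lv σ + D.Lv τ) σ τ le_rfl h with h' | h'
      · exact Or.inl h'
      · exact Or.inr (Or.inr h')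
    · exact Or.inr (Or.inl h)
    · rcases D.total_aux hD (D.Lv τ + D.Lv σ) τ σ le_rfl h with h' | h'
      · exact Or.inr (Or.inr h')
      · exact Or.inl h'
  · rintro h rfl
    exact D.not_lt_self σ h
  · rintro rfl h
    exact D.not_lt_self σ h
end

section
/- If (X, ι_X, L_X) is a good Bachmann-Howard system for a prae-dilator T (i.e., ι_X : X → ϑ_T(X) is an order embedding), then the triple (ϑ_T(X), ι_{ϑ_T(X)}, L_{ϑ_T(X)}), where ι_{ϑ_T(X)}(ϑσ) := ϑ T_{ι_X}(σ), is again a Bachmann-Howard system: L_{ϑ_T(ϑ_T(X))} ∘ ι_{ϑ_T(X)} = L_{ϑ_T(X)}. -/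
/-- A prae-dilator: a functor on (the category of) linear orders with order embeddings
as morphisms, together with a natural support transformation `supp^T : T ⇒ [·]^{<ω}`
such that every `σ ∈ T_X` lies in the range of `T` applied to the inclusion of
`supp^T_X(σ)` into `X`. -/
structure PraeDilator where
  obj : Type → Type
  ord : (X : Type) → [inst : LinearOrder X] → LinearOrder (obj X)
  map : {X Y : Type} → [instX : LinearOrder X] → [instY : LinearOrder Y] →
    (X ↪o Y) → obj X → obj Y
  supp : {X : Type} → obj X → Finset X
  map_lt : ∀ {X Y : Type} [LinearOrder X] [LinearOrder Y] (f : X ↪o Y) (σ τ : obj X),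
    (ord X).lt σ τ ↔ (ord Y).lt (map f σ) (map f τ)
  map_id : ∀ {X : Type} [LinearOrder X] (σ : obj X),
    map (RelEmbedding.refl ((· ≤ ·) : X → X → Prop)) σ = σ
  map_comp : ∀ {X Y Z : Type} [LinearOrder X] [LinearOrder Y] [LinearOrder Z]
    (f : X ↪o Y) (g : Y ↪o Z) (σ : obj X), map (f.trans g) σ = map g (map f σ)
  supp_natural : ∀ {X Y : Type} [LinearOrder X] [LinearOrder Y] (f : X ↪o Y)
    (σ : obj X) (y : Y), y ∈ supp (map f σ) ↔ ∃ x ∈ supp σ, f x = y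
  supp_spec : ∀ {X : Type} [LinearOrder X] (σ : obj X),
    ∃ τ : obj {x : X // x ∈ supp σ}, map (OrderEmbedding.subtype fun x => x ∈ supp σ) τ = σ

/-- If `(X, ι_X, L_X)` is a good Bachmann-Howard system for `T` (goodness: `ι_X` is an
order embedding `e : X ↪o ΘX`, where `ΘX` carries the recursively defined collapse order,
realized via the term bijection `θ : T_X ≃ ϑ_T(X)`, `θ σ = ϑσ`), then
`(ϑ_T(X), ι_{ϑ_T(X)}, L_{ϑ_T(X)})` is again a Bachmann-Howard system:
`L_{ϑ_T(ϑ_T(X))} ∘ ι_{ϑ_T(X)} = L_{ϑ_T(X)}`, where `ι_{ϑ_T(X)}(ϑσ) = ϑ T_{ι_X}(σ)`,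
i.e. the term of index `T.map e (θ.symm s)`. -/
theorem BHSystem.iterate (T : PraeDilator) (X ΘX : Type) [LinearOrder X] [LinearOrder ΘX]
    (θ : T.obj X ≃ ΘX) (e : X ↪o ΘX) (L : X → ℕ)
    (hBH : ∀ x : X, (T.supp (θ.symm (e x))).sup L + 1 = L x)
    (horder : ∀ s t : ΘX, s < t ↔
      ((T.ord X).lt (θ.symm s) (θ.symm t) ∧ ∀ x ∈ T.supp (θ.symm s), e x < t) ∨
      ((T.ord X).lt (θ.symm t) (θ.symm s) ∧ ∃ x ∈ T.supp (θ.symm t), s ≤ e x)) :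
    ∀ s : ΘX,
      (T.supp (T.map e (θ.symm s))).sup (fun y : ΘX => (T.supp (θ.symm y)).sup L + 1) + 1
        = (T.supp (θ.symm s)).sup L + 1 := by
  intro s
  congr 1
  have himg : T.supp (T.map e (θ.symm s)) = (T.supp (θ.symm s)).image e := by
    ext y
    rw [T.supp_natural, Finset.mem_image]
  rw [himg, Finset.sup_image]
  apply Finset.sup_congr rfl
  intro x _
  exact hBH x
end

section
/- For every prae-dilator T, the order BH(T) is a Bachmann-Howard fixed point of T: there is a function ϑ : T_{BH(T)} → BH(T) such that (i) σ <_{T_{BH(T)}} τ together with supp^T_{BH(T)}(σ) <^fin_{BH(T)} ϑ(τ) implies ϑ(σ) <_{BH(T)} ϑ(τ), and (ii) supp^T_{BH(T)}(σ) <^fin_{BH(T)} ϑ(σ) for all σ. -/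
/-- The direct limit `BH(T)` (here `B`) of the chain `X_0 = ∅`, `X_{n+1} = ϑ_T(X_n)`
of good Bachmann-Howard systems is a Bachmann-Howard fixed point of `T`: there is a
Bachmann-Howard collapse `ϑ : T_{BH(T)} → BH(T)` satisfying
(i) `σ < τ` and `supp σ <^fin ϑ(τ)` imply `ϑ(σ) < ϑ(τ)`, and (ii) `supp σ <^fin ϑ(σ)`. -/
theorem BH_is_fixed_point (T : PraeDilator) (Xf : ℕ → Type) [∀ n, LinearOrder (Xf n)]
    (hX0 : IsEmpty (Xf 0))
    (θ : ∀ n, T.obj (Xf n) ≃ Xf (n + 1))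
    (e : ∀ n, Xf n ↪o Xf (n + 1))
    (L : ∀ n, Xf n → ℕ)
    (hLdef : ∀ n (s : Xf (n + 1)), L (n + 1) s = (T.supp ((θ n).symm s)).sup (L n) + 1)
    (hBH : ∀ n (x : Xf n), L (n + 1) (e n x) = L n x)
    (horder : ∀ n (s t : Xf (n + 1)), s < t ↔
      ((T.ord (Xf n)).lt ((θ n).symm s) ((θ n).symm t) ∧
        ∀ x ∈ T.supp ((θ n).symm s), e n x < t) ∨
      ((T.ord (Xf n)).lt ((θ n).symm t) ((θ n).symm s) ∧
        ∃ x ∈ T.supp ((θ n).symm t), s ≤ e n x))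
    (hedef : ∀ n (s : Xf (n + 1)), e (n + 1) s = θ (n + 1) (T.map (e n) ((θ n).symm s)))
    (B : Type) [LinearOrder B] (j : ∀ n, Xf n ↪o B)
    (hcomm : ∀ n (x : Xf n), j (n + 1) (e n x) = j n x)
    (hcof : ∀ b : B, ∃ n, ∃ x : Xf n, j n x = b) :
    ∃ ϑ : T.obj B → B,
      (∀ σ τ : T.obj B, (T.ord B).lt σ τ → (∀ x ∈ T.supp σ, x < ϑ τ) → ϑ σ < ϑ τ) ∧
      (∀ σ : T.obj B, ∀ x ∈ T.supp σ, x < ϑ σ) := by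
  classical
  -- injectivity of T.map (j m)
  have map_inj : ∀ m (α β : T.obj (Xf m)), T.map (j m) α = T.map (j m) β → α = β := by
    intro m α β h
    letI iX := T.ord (Xf m)
    letI iB := T.ord B
    rcases lt_trichotomy α β with hlt | heq | hgt
    · exact absurd ((T.map_lt (j m) α β).mp hlt) (by rw [h]; exact lt_irrefl _)
    · exact heq
    · exact absurd ((T.map_lt (j m) β α).mp hgt) (by rw [h]; exact lt_irrefl _)
  have e_j : ∀ n, (e n).trans (j (n + 1)) = j n := by
    intro n
    ext x
    exact hcomm n x
  have rep_lift : ∀ n (α : T.obj (Xf n)),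
      T.map (j (n + 1)) (T.map (e n) α) = T.map (j n) α ∧
      j (n + 2) (θ (n + 1) (T.map (e n) α)) = j (n + 1) (θ n α) := by
    intro n α
    constructor
    · rw [← T.map_comp, e_j]
    · have h1 : e (n + 1) (θ n α) = θ (n + 1) (T.map (e n) ((θ n).symm (θ n α))) :=
        hedef n (θ n α)
      rw [Equiv.symm_apply_apply] at h1
      rw [← h1, hcomm]
  have rep_up : ∀ n (α : T.obj (Xf n)) m, n ≤ m → ∃ β : T.obj (Xf m),
      T.map (j m) β = T.map (j n) α ∧ j (m + 1) (θ m β) = j (n + 1) (θ n α) := by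
    intro n α m hnm
    induction m, hnm using Nat.le_induction with
    | base => exact ⟨α, rfl, rfl⟩
    | succ m hm ih =>
      obtain ⟨β, h1, h2⟩ := ih
      exact ⟨T.map (e m) β, by rw [(rep_lift m β).1, h1], by rw [(rep_lift m β).2, h2]⟩
  have val_eq : ∀ n (α : T.obj (Xf n)) m (β : T.obj (Xf m)),
      T.map (j n) α = T.map (j m) β → j (n + 1) (θ n α) = j (m + 1) (θ m β) := by
    intro n α m β h
    rcases le_total n m with hnm | hmn
    · obtain ⟨γ, h1, h2⟩ := rep_up n α m hnm
      have hγ : γ = β := map_inj m γ β (by rw [h1, h])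
      rw [← h2, hγ]
    · obtain ⟨γ, h1, h2⟩ := rep_up m β n hmn
      have hγ : γ = α := map_inj n γ α (by rw [h1, ← h])
      rw [← h2, hγ]
  have range_up : ∀ (n x m), n ≤ m → ∃ y : Xf m, j m y = j n x := by
    intro n x m h
    induction m, h using Nat.le_induction with
    | base => exact ⟨x, rfl⟩
    | succ m hm ih =>
      obtain ⟨y, hy⟩ := ih
      exact ⟨e m y, by rw [hcomm, hy]⟩
  -- existence of representation
  have rep_ex : ∀ σ : T.obj B, ∃ (n : ℕ) (α : T.obj (Xf n)), T.map (j n) α = σ := by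
    intro σ
    choose nf yf hyf using hcof
    set N := (T.supp σ).sup nf with hN
    have hsub : ∀ x : {x : B // x ∈ T.supp σ}, ∃ y : Xf N, j N y = x.val := by
      rintro ⟨x, hx⟩
      obtain ⟨y, hy⟩ := range_up (nf x) (yf x) N (Finset.le_sup hx)
      exact ⟨y, by rw [hy, hyf]⟩
    choose g hg using hsub
    have gmono : ∀ a b, g a ≤ g b ↔ a ≤ b := by
      intro a b
      rw [← (j N).le_iff_le, hg, hg, ← Subtype.coe_le_coe]
    let gE : {x : B // x ∈ T.supp σ} ↪o Xf N := OrderEmbedding.ofMapLEIff g gmono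
    obtain ⟨τ, hτ⟩ := T.supp_spec σ
    refine ⟨N, T.map gE τ, ?_⟩
    rw [← T.map_comp]
    have hcompat : gE.trans (j N) = OrderEmbedding.subtype (fun x => x ∈ T.supp σ) := by
      ext a
      exact hg a
    rw [hcompat, hτ]
  -- the key stage lemma, by strong induction on rank
  have stage : ∀ k n (σ' : T.obj (Xf n)) (x : Xf n), L n x = k →
      L n x ≤ (T.supp σ').sup (L n) → (∃ z ∈ T.supp σ', x ≤ z) →
      e n x < θ n σ' := by
    intro k
    induction k using Nat.strong_induction_on with
    | _ k IH =>
      rintro n σ' x hk hsup ⟨z, hz, hxz⟩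
      rcases n with _ | m
      · exact (hX0.false x).elim
      · rw [horder (m + 1)]
        rw [Equiv.symm_apply_apply]
        have hsx : (θ (m + 1)).symm (e (m + 1) x) = T.map (e m) ((θ m).symm x) := by
          rw [hedef m x, Equiv.symm_apply_apply]
        letI := T.ord (Xf (m + 1))
        rcases lt_trichotomy ((θ (m + 1)).symm (e (m + 1) x)) σ' with hlt | heq | hgt
        · left
          refine ⟨hlt, ?_⟩
          intro y hy
          rw [hsx, T.supp_natural] at hy
          obtain ⟨y', hy', rfl⟩ := hy
          have hrx : L (m + 1) x = (T.supp ((θ m).symm x)).sup (L m) + 1 := hLdef m x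
          have hry : L m y' ≤ (T.supp ((θ m).symm x)).sup (L m) := Finset.le_sup hy'
          have hylt : e m y' < x := by
            have h5 := IH (L m y') (by omega) m ((θ m).symm x) y' rfl hry
              ⟨y', hy', le_refl _⟩
            rwa [Equiv.apply_symm_apply] at h5
          have hrank : L (m + 1) (e m y') < k := by
            rw [hBH m y']; omega
          have hsup2 : L (m + 1) (e m y') ≤ (T.supp σ').sup (L (m + 1)) := by
            rw [hBH m y']; omega
          exact IH (L (m + 1) (e m y')) hrank (m + 1) σ' (e m y') rfl hsup2
            ⟨z, hz, le_of_lt (lt_of_lt_of_le hylt hxz)⟩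
        · exfalso
          have hst : e (m + 1) x = θ (m + 1) σ' := by
            rw [← heq, Equiv.apply_symm_apply]
          have h1 : L (m + 2) (e (m + 1) x) = L (m + 1) x := hBH (m + 1) x
          have h2 : L (m + 2) (θ (m + 1) σ') =
              (T.supp ((θ (m + 1)).symm (θ (m + 1) σ'))).sup (L (m + 1)) + 1 :=
            hLdef (m + 1) (θ (m + 1) σ')
          rw [Equiv.symm_apply_apply] at h2
          rw [hst, h2] at h1
          omega
        · right
          exact ⟨hgt, z, hz, (e (m + 1)).le_iff_le.mpr hxz⟩
  -- definition of the collapse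
  choose nn aa ha using rep_ex
  refine ⟨fun σ => j (nn σ + 1) (θ (nn σ) (aa σ)), ?_, ?_⟩
  · intro σ τ hστ hsupp
    set K := max (nn σ) (nn τ) with hK
    obtain ⟨α, hα1, hα2⟩ := rep_up (nn σ) (aa σ) K (le_max_left _ _)
    obtain ⟨β, hβ1, hβ2⟩ := rep_up (nn τ) (aa τ) K (le_max_right _ _)
    have hα : T.map (j K) α = σ := by rw [hα1, ha]
    have hβ : T.map (j K) β = τ := by rw [hβ1, ha]
    letI := T.ord (Xf K)
    have hab : (T.ord (Xf K)).lt α β := by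
      rw [T.map_lt (j K), hα, hβ]
      exact hστ
    have hvτ : j (nn τ + 1) (θ (nn τ) (aa τ)) = j (K + 1) (θ K β) :=
      val_eq _ _ _ _ (by rw [hβ1])
    have hvσ : j (nn σ + 1) (θ (nn σ) (aa σ)) = j (K + 1) (θ K α) :=
      val_eq _ _ _ _ (by rw [hα1])
    have hsup2 : ∀ a ∈ T.supp α, e K a < θ K β := by
      intro a haK
      have hmem : j K a ∈ T.supp σ := by
        rw [← hα, T.supp_natural]
        exact ⟨a, haK, rfl⟩
      have h6 : j K a < j (nn τ + 1) (θ (nn τ) (aa τ)) := hsupp _ hmem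
      rw [hvτ, ← hcomm K a] at h6
      exact (j (K + 1)).lt_iff_lt.mp h6
    have hθ : θ K α < θ K β := by
      rw [horder K]
      left
      rw [Equiv.symm_apply_apply, Equiv.symm_apply_apply]
      exact ⟨hab, hsup2⟩
    show j (nn σ + 1) (θ (nn σ) (aa σ)) < j (nn τ + 1) (θ (nn τ) (aa τ))
    rw [hvσ, hvτ]
    exact (j (K + 1)).lt_iff_lt.mpr hθ
  · intro σ x hx
    rw [← ha σ, T.supp_natural] at hx
    obtain ⟨a, haA, rfl⟩ := hx
    have h7 := stage (L (nn σ) a) (nn σ) (aa σ) a rfl (Finset.le_sup haA)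
      ⟨a, haA, le_refl a⟩
    show j (nn σ) a < j (nn σ + 1) (θ (nn σ) (aa σ))
    calc j (nn σ) a = j (nn σ + 1) (e (nn σ) a) := (hcomm (nn σ) a).symm
      _ < j (nn σ + 1) (θ (nn σ) (aa σ)) := (j (nn σ + 1)).lt_iff_lt.mpr h7
end

section
/- Let T be a prae-dilator, Y a Bachmann-Howard fixed point of T with collapse ϑ_Y : T_Y → Y, (X, ι_X, L_X) a good Bachmann-Howard system, and h_X : X → Y a Bachmann-Howard interpretation (an order embedding with h_X^ϑ ∘ ι_X = h_X, where h_X^ϑ(ϑσ) := ϑ_Y(T_{h_X}(σ))). Then h_X^ϑ : ϑ_T(X) → Y is an order embedding. -/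
/-- Let `Y` be a Bachmann-Howard fixed point of `T` with collapse `ϑY`, let
`(X, ι_X, L_X)` be a good Bachmann-Howard system (with `ι_X = e : X ↪o ΘX`, where
`ΘX` carries the collapse order realized via the term bijection `θ`), and let
`h : X ↪o Y` be a Bachmann-Howard interpretation, i.e. `h^ϑ ∘ ι_X = h` where
`h^ϑ(ϑσ) = ϑY(T_h(σ))`.  Then `h^ϑ : ϑ_T(X) → Y` is an order embedding. -/
theorem BH_interpretation_embedding (T : PraeDilator) (X ΘX Y : Type)
    [LinearOrder X] [LinearOrder ΘX] [LinearOrder Y]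
    (θ : T.obj X ≃ ΘX) (e : X ↪o ΘX) (L : X → ℕ)
    (hBH : ∀ x : X, (T.supp (θ.symm (e x))).sup L + 1 = L x)
    (horder : ∀ s t : ΘX, s < t ↔
      ((T.ord X).lt (θ.symm s) (θ.symm t) ∧ ∀ x ∈ T.supp (θ.symm s), e x < t) ∨
      ((T.ord X).lt (θ.symm t) (θ.symm s) ∧ ∃ x ∈ T.supp (θ.symm t), s ≤ e x))
    (ϑY : T.obj Y → Y)
    (hcol1 : ∀ σ τ : T.obj Y, (T.ord Y).lt σ τ → (∀ y ∈ T.supp σ, y < ϑY τ) → ϑY σ < ϑY τ)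
    (hcol2 : ∀ σ : T.obj Y, ∀ y ∈ T.supp σ, y < ϑY σ)
    (h : X ↪o Y)
    (hinterp : ∀ x : X, ϑY (T.map h (θ.symm (e x))) = h x) :
    StrictMono (fun s : ΘX => ϑY (T.map h (θ.symm s))) := by
  intro s t hst
  set M : ΘX → ℕ := fun s => (T.supp (θ.symm s)).sup L with hM
  suffices H : ∀ n : ℕ, ∀ s t : ΘX, M s + M t ≤ n → s < t →
      ϑY (T.map h (θ.symm s)) < ϑY (T.map h (θ.symm t)) by
    exact H (M s + M t) s t le_rfl hst
  intro n
  induction n using Nat.strong_induction_on with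
  | _ n IH =>
    intro s t hn hst
    have key : ∀ x : X, M (e x) < L x := fun x => by
      have := hBH x; simp only [hM]; omega
    rcases (horder s t).mp hst with ⟨hlt, hsup⟩ | ⟨hlt, x, hx, hsx⟩
    · apply hcol1
      · exact (T.map_lt h _ _).mp (by simpa using hlt)
      · intro y hy
        rw [T.supp_natural] at hy
        obtain ⟨x, hx, rfl⟩ := hy
        have hLx : L x ≤ M s := Finset.le_sup hx
        have hm : M (e x) + M t < n := by have := key x; omega
        have := IH (M (e x) + M t) hm (e x) t le_rfl (hsup x hx)
        rwa [hinterp] at this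
    · have hLx : L x ≤ M t := Finset.le_sup hx
      have hxlt : h x < ϑY (T.map h (θ.symm t)) := by
        apply hcol2
        rw [T.supp_natural]; exact ⟨x, hx, rfl⟩
      rcases eq_or_lt_of_le hsx with heq | hlt'
      · rw [heq, hinterp]; exact hxlt
      · have hm : M s + M (e x) < n := by have := key x; omega
        have := IH (M s + M (e x)) hm s (e x) le_rfl hlt'
        rw [hinterp] at this
        exact this.trans hxlt
end

section
/- Under the same assumptions, h_X^ϑ : ϑ_T(X) → Y is itself a Bachmann-Howard interpretation: writing h_X^{ϑ²} := (h_X^ϑ)^ϑ : ϑ_T(ϑ_T(X)) → Y, one has h_X^{ϑ²} ∘ ι_{ϑ_T(X)} = h_X^ϑ. -/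
/-- Under the same assumptions, `h^ϑ : ϑ_T(X) → Y` (as an order embedding `hθe`) is
itself a Bachmann-Howard interpretation: writing `h^{ϑ²} = (h^ϑ)^ϑ`, one has
`h^{ϑ²} ∘ ι_{ϑ_T(X)} = h^ϑ`, i.e. `ϑY(T_{h^ϑ}(T_{ι_X}(σ))) = h^ϑ(ϑσ)` for all `σ`. -/
theorem BH_interpretation_iterate (T : PraeDilator) (X ΘX Y : Type)
    [LinearOrder X] [LinearOrder ΘX] [LinearOrder Y]
    (θ : T.obj X ≃ ΘX) (e : X ↪o ΘX) (L : X → ℕ)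
    (hBH : ∀ x : X, (T.supp (θ.symm (e x))).sup L + 1 = L x)
    (horder : ∀ s t : ΘX, s < t ↔
      ((T.ord X).lt (θ.symm s) (θ.symm t) ∧ ∀ x ∈ T.supp (θ.symm s), e x < t) ∨
      ((T.ord X).lt (θ.symm t) (θ.symm s) ∧ ∃ x ∈ T.supp (θ.symm t), s ≤ e x))
    (ϑY : T.obj Y → Y)
    (hcol1 : ∀ σ τ : T.obj Y, (T.ord Y).lt σ τ → (∀ y ∈ T.supp σ, y < ϑY τ) → ϑY σ < ϑY τ)
    (hcol2 : ∀ σ : T.obj Y, ∀ y ∈ T.supp σ, y < ϑY σ)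
    (h : X ↪o Y)
    (hinterp : ∀ x : X, ϑY (T.map h (θ.symm (e x))) = h x)
    (hθe : ΘX ↪o Y) (hθe_def : ∀ s : ΘX, hθe s = ϑY (T.map h (θ.symm s))) :
    ∀ s : ΘX, ϑY (T.map hθe (T.map e (θ.symm s))) = hθe s := by
  intro s
  have key : e.trans hθe = h := by
    ext x
    rw [RelEmbedding.trans_apply, hθe_def, hinterp]
  rw [← T.map_comp, key, hθe_def]
end

section
/- For any prae-dilator T, the order BH(T) embeds into every Bachmann-Howard fixed point of T; i.e., BH(T) is the minimal Bachmann-Howard fixed point. Consequently, BH(T) is well-founded if and only if T has some well-founded Bachmann-Howard fixed point. -/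
/-- `BH(T)` (here `B`, the direct limit of the chain `X_0 = ∅`, `X_{n+1} = ϑ_T(X_n)`)
embeds into every Bachmann-Howard fixed point of `T`, i.e. it is the minimal
Bachmann-Howard fixed point.  Consequently `BH(T)` is well-founded if and only if
`T` has some well-founded Bachmann-Howard fixed point. -/
theorem BH_minimal (T : PraeDilator) (Xf : ℕ → Type) [∀ n, LinearOrder (Xf n)]
    (hX0 : IsEmpty (Xf 0))
    (θ : ∀ n, T.obj (Xf n) ≃ Xf (n + 1))
    (e : ∀ n, Xf n ↪o Xf (n + 1))
    (L : ∀ n, Xf n → ℕ)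
    (hLdef : ∀ n (s : Xf (n + 1)), L (n + 1) s = (T.supp ((θ n).symm s)).sup (L n) + 1)
    (hBH : ∀ n (x : Xf n), L (n + 1) (e n x) = L n x)
    (horder : ∀ n (s t : Xf (n + 1)), s < t ↔
      ((T.ord (Xf n)).lt ((θ n).symm s) ((θ n).symm t) ∧
        ∀ x ∈ T.supp ((θ n).symm s), e n x < t) ∨
      ((T.ord (Xf n)).lt ((θ n).symm t) ((θ n).symm s) ∧
        ∃ x ∈ T.supp ((θ n).symm t), s ≤ e n x))
    (hedef : ∀ n (s : Xf (n + 1)), e (n + 1) s = θ (n + 1) (T.map (e n) ((θ n).symm s)))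
    (B : Type) [LinearOrder B] (j : ∀ n, Xf n ↪o B)
    (hcomm : ∀ n (x : Xf n), j (n + 1) (e n x) = j n x)
    (hcof : ∀ b : B, ∃ n, ∃ x : Xf n, j n x = b) :
    (∀ (Y : Type) (iY : LinearOrder Y) (ϑY : T.obj Y → Y),
      (∀ σ τ : T.obj Y, (@PraeDilator.ord T Y iY).lt σ τ →
        (∀ x ∈ T.supp σ, iY.lt x (ϑY τ)) → iY.lt (ϑY σ) (ϑY τ)) →
      (∀ σ : T.obj Y, ∀ x ∈ T.supp σ, iY.lt x (ϑY σ)) →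
      ∃ f : B → Y, ∀ a b : B, a < b ↔ iY.lt (f a) (f b)) ∧
    (WellFounded ((· < ·) : B → B → Prop) ↔
      ∃ (Y : Type) (iY : LinearOrder Y) (ϑY : T.obj Y → Y),
        (∀ σ τ : T.obj Y, (@PraeDilator.ord T Y iY).lt σ τ →
          (∀ x ∈ T.supp σ, iY.lt x (ϑY τ)) → iY.lt (ϑY σ) (ϑY τ)) ∧
        (∀ σ : T.obj Y, ∀ x ∈ T.supp σ, iY.lt x (ϑY σ)) ∧
        WellFounded iY.lt) := by
  haveI := hX0
  choose nB xB hjB using hcof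
  -- lifting points along the chain, preserving `j`
  have hup : ∀ (m n : ℕ), m ≤ n → ∀ x : Xf m, ∃ y : Xf n, j n y = j m x := by
    intro m n h x
    obtain ⟨k, rfl⟩ := Nat.exists_eq_add_of_le h
    clear h
    induction k with
    | zero => exact ⟨x, rfl⟩
    | succ k ih =>
      obtain ⟨y, hy⟩ := ih
      exact ⟨e (m + k) y, (hcomm (m + k) y).trans hy⟩
  -- Part 1 : the embedding into any Bachmann-Howard fixed point
  have main : ∀ (Y : Type) (iY : LinearOrder Y) (ϑY : T.obj Y → Y),
      (∀ σ τ : T.obj Y, (@PraeDilator.ord T Y iY).lt σ τ →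
        (∀ x ∈ T.supp σ, iY.lt x (ϑY τ)) → iY.lt (ϑY σ) (ϑY τ)) →
      (∀ σ : T.obj Y, ∀ x ∈ T.supp σ, iY.lt x (ϑY σ)) →
      ∃ f : B → Y, ∀ a b : B, a < b ↔ iY.lt (f a) (f b) := by
    intro Y iY ϑY h1 h2
    letI := iY
    -- the key monotonicity lemma for the Bachmann-Howard interpretation
    have keymono : ∀ (n : ℕ) (f : Xf n ↪o Y),
        (∀ x : Xf n, ϑY (T.map f ((θ n).symm (e n x))) = f x) →
        ∀ (k : ℕ) (s t : Xf (n + 1)), L (n + 1) s + L (n + 1) t ≤ k → s < t →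
          ϑY (T.map f ((θ n).symm s)) < ϑY (T.map f ((θ n).symm t)) := by
      intro n f hcoh k
      induction k with
      | zero =>
        intro s t hk _
        rw [hLdef n s] at hk
        omega
      | succ k ih =>
        intro s t hk hst
        rcases (horder n s t).mp hst with ⟨hlt, hsup⟩ | ⟨hlt, x, hx2, hle⟩
        · refine h1 _ _ ((T.map_lt f _ _).mp hlt) ?_
          intro y hy
          obtain ⟨x, hx2, rfl⟩ := (T.supp_natural f _ y).mp hy
          show f x < ϑY (T.map f ((θ n).symm t))
          rw [← hcoh x]
          refine ih (e n x) t ?_ (hsup x hx2)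
          have h3 := hBH n x
          have h4 : L n x ≤ (T.supp ((θ n).symm s)).sup (L n) := Finset.le_sup hx2
          have h5 := hLdef n s
          omega
        · have hmem : f x ∈ T.supp (T.map f ((θ n).symm t)) :=
            (T.supp_natural f _ (f x)).mpr ⟨x, hx2, rfl⟩
          have hfx : f x < ϑY (T.map f ((θ n).symm t)) := h2 _ _ hmem
          have hsle : ϑY (T.map f ((θ n).symm s)) ≤ f x := by
            rcases eq_or_lt_of_le hle with heq | hlt2
            · rw [heq, hcoh x]
            · refine le_of_lt ?_
              have h6 := ih s (e n x) (by
                have h3 := hBH n x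
                have h4 : L n x ≤ (T.supp ((θ n).symm t)).sup (L n) := Finset.le_sup hx2
                have h5 := hLdef n t
                omega) hlt2
              rwa [hcoh x] at h6
          exact lt_of_le_of_lt hsle hfx
    -- one step of the construction preserves the coherence property
    have step' : ∀ (n : ℕ) (f : Xf n ↪o Y) (g : Xf (n + 1) ↪o Y),
        (∀ s : Xf (n + 1), g s = ϑY (T.map f ((θ n).symm s))) →
        (∀ x : Xf n, ϑY (T.map f ((θ n).symm (e n x))) = f x) →
        ∀ x : Xf (n + 1), ϑY (T.map g ((θ (n + 1)).symm (e (n + 1) x))) = g x := by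
      intro n f g hg hf x
      rw [hedef n x, Equiv.symm_apply_apply, ← T.map_comp]
      have h2' : (e n).trans g = f := RelEmbedding.ext fun z => (hg (e n z)).trans (hf z)
      rw [h2', hg x]
    -- the tower of embeddings
    have hGex : ∃ G : ∀ n, Xf n ↪o Y, ∀ n (x : Xf n), G (n + 1) (e n x) = G n x := by
      exact
        (let F : ∀ n, Σ' f : Xf n ↪o Y, ∀ x : Xf n, ϑY (T.map f ((θ n).symm (e n x))) = f x :=
          fun n => Nat.rec
            (motive := fun n => Σ' f : Xf n ↪o Y,
              ∀ x : Xf n, ϑY (T.map f ((θ n).symm (e n x))) = f x)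
            ⟨⟨⟨fun x => isEmptyElim x, fun a => isEmptyElim a⟩, fun {a b} => isEmptyElim a⟩,
              fun x => isEmptyElim x⟩
            (fun n p =>
              let g : Xf (n + 1) ↪o Y :=
                OrderEmbedding.ofStrictMono (fun s => ϑY (T.map p.1 ((θ n).symm s)))
                  (fun s t hst =>
                    keymono n p.1 p.2 (L (n + 1) s + L (n + 1) t) s t le_rfl hst)
              ⟨g, step' n p.1 g (fun s => rfl) p.2⟩)
            n
        ⟨fun n => (F n).1, fun n x => (F n).2 x⟩)
    obtain ⟨G, hGcoh⟩ := hGex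
    have hGup : ∀ (m n : ℕ), m ≤ n → ∀ x : Xf m,
        ∃ y : Xf n, j n y = j m x ∧ G n y = G m x := by
      intro m n h x
      obtain ⟨k, rfl⟩ := Nat.exists_eq_add_of_le h
      clear h
      induction k with
      | zero => exact ⟨x, rfl, rfl⟩
      | succ k ih =>
        obtain ⟨y, hy1, hy2⟩ := ih
        exact ⟨e (m + k) y, (hcomm (m + k) y).trans hy1, (hGcoh (m + k) y).trans hy2⟩
    refine ⟨fun b => G (nB b) (xB b), ?_⟩
    have hmono : StrictMono (fun b : B => G (nB b) (xB b)) := by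
      intro a b hab
      rcases le_total (nB a) (nB b) with h | h
      · obtain ⟨y, hy1, hy2⟩ := hGup _ _ h (xB a)
        have hyx : y < xB b := by
          have h7 : j (nB b) y < j (nB b) (xB b) := by
            rw [hy1, hjB a, hjB b]; exact hab
          exact (j (nB b)).lt_iff_lt.mp h7
        show G (nB a) (xB a) < G (nB b) (xB b)
        rw [← hy2]
        exact (G (nB b)).strictMono hyx
      · obtain ⟨y, hy1, hy2⟩ := hGup _ _ h (xB b)
        have hyx : xB a < y := by
          have h7 : j (nB a) (xB a) < j (nB a) y := by
            rw [hy1, hjB a, hjB b]; exact hab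
          exact (j (nB a)).lt_iff_lt.mp h7
        show G (nB a) (xB a) < G (nB b) (xB b)
        rw [← hy2]
        exact (G (nB a)).strictMono hyx
    intro a b
    exact hmono.lt_iff_lt.symm
  -- Part 2 : constructing a collapse on B itself
  have hjinj : ∀ (N : ℕ) (σ τ : T.obj (Xf N)), T.map (j N) σ = T.map (j N) τ → σ = τ := by
    intro N σ τ h
    letI := T.ord (Xf N)
    letI := T.ord B
    rcases lt_trichotomy σ τ with hlt | heq | hlt
    · exfalso
      have h8 := (T.map_lt (j N) σ τ).mp hlt
      rw [h] at h8
      exact lt_irrefl _ h8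
    · exact heq
    · exfalso
      have h8 := (T.map_lt (j N) τ σ).mp hlt
      rw [h] at h8
      exact lt_irrefl _ h8
  have hrepup : ∀ (M N : ℕ), M ≤ N → ∀ τ : T.obj (Xf M), ∃ ρ : T.obj (Xf N),
      T.map (j N) ρ = T.map (j M) τ ∧ j (N + 1) (θ N ρ) = j (M + 1) (θ M τ) := by
    intro M N h τ
    obtain ⟨k, rfl⟩ := Nat.exists_eq_add_of_le h
    clear h
    induction k with
    | zero => exact ⟨τ, rfl, rfl⟩
    | succ k ih =>
      obtain ⟨ρ, hρ1, hρ2⟩ := ih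
      refine ⟨T.map (e (M + k)) ρ, ?_, ?_⟩
      · rw [← T.map_comp]
        show T.map ((e (M + k)).trans (j (M + k + 1))) ρ = T.map (j M) τ
        have h9 : (e (M + k)).trans (j (M + k + 1)) = j (M + k) :=
          RelEmbedding.ext fun z => hcomm (M + k) z
        rw [h9, hρ1]
      · show j (M + k + 1 + 1) (θ (M + k + 1) (T.map (e (M + k)) ρ)) = j (M + 1) (θ M τ)
        have h3 : e (M + k + 1) (θ (M + k) ρ) = θ (M + k + 1) (T.map (e (M + k)) ρ) := by
          rw [hedef (M + k) (θ (M + k) ρ), Equiv.symm_apply_apply]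
        rw [← h3, hcomm, hρ2]
  have hrep : ∀ σ : T.obj B, ∃ (N : ℕ) (τ : T.obj (Xf N)), T.map (j N) τ = σ := by
    intro σ
    obtain ⟨ρ, hρ⟩ := T.supp_spec σ
    have hpre : ∀ x : {x : B // x ∈ T.supp σ},
        ∃ y : Xf ((T.supp σ).sup nB), j ((T.supp σ).sup nB) y = x.1 := by
      intro x
      obtain ⟨y, hy⟩ := hup (nB x.1) ((T.supp σ).sup nB) (Finset.le_sup x.2) (xB x.1)
      exact ⟨y, hy.trans (hjB x.1)⟩
    choose g0 hg0 using hpre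
    have hinj : Function.Injective g0 := by
      intro a b hab
      apply Subtype.ext
      rw [← hg0 a, ← hg0 b, hab]
    have hrel : ∀ a b : {x : B // x ∈ T.supp σ}, g0 a ≤ g0 b ↔ a ≤ b := by
      intro a b
      rw [← (j ((T.supp σ).sup nB)).le_iff_le, hg0 a, hg0 b]
      exact Subtype.coe_le_coe
    refine ⟨(T.supp σ).sup nB,
      T.map (⟨⟨g0, hinj⟩, fun {a b} => hrel a b⟩ :
        {x : B // x ∈ T.supp σ} ↪o Xf ((T.supp σ).sup nB)) ρ, ?_⟩
    rw [← T.map_comp]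
    have hge : (⟨⟨g0, hinj⟩, fun {a b} => hrel a b⟩ :
        {x : B // x ∈ T.supp σ} ↪o Xf ((T.supp σ).sup nB)).trans (j ((T.supp σ).sup nB)) =
        OrderEmbedding.subtype fun x => x ∈ T.supp σ :=
      RelEmbedding.ext fun z => hg0 z
    rw [hge, hρ]
  have huniq : ∀ (M N : ℕ) (τ : T.obj (Xf M)) (ρ : T.obj (Xf N)),
      T.map (j M) τ = T.map (j N) ρ → j (M + 1) (θ M τ) = j (N + 1) (θ N ρ) := by
    intro M N τ ρ h
    rcases le_total M N with hle | hle
    · obtain ⟨τ', h1, h2⟩ := hrepup M N hle τ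
      have h10 : τ' = ρ := hjinj N _ _ (by rw [h1, h])
      rw [← h2, h10]
    · obtain ⟨ρ', h1, h2⟩ := hrepup N M hle ρ
      have h10 : ρ' = τ := hjinj M _ _ (by rw [h1, ← h])
      rw [← h2, h10]
  choose rN rτ hr using hrep
  have hϑval : ∀ (σ : T.obj B) (N : ℕ) (τ₀ : T.obj (Xf N)), T.map (j N) τ₀ = σ →
      j (rN σ + 1) (θ (rN σ) (rτ σ)) = j (N + 1) (θ N τ₀) :=
    fun σ N τ₀ h => huniq (rN σ) N (rτ σ) τ₀ (by rw [hr σ, h])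
  have hrep2 : ∀ σ τ : T.obj B, ∃ (N : ℕ) (σ₀ τ₀ : T.obj (Xf N)),
      T.map (j N) σ₀ = σ ∧ T.map (j N) τ₀ = τ := by
    intro σ τ
    rcases le_total (rN σ) (rN τ) with h | h
    · obtain ⟨σ₀', h1, _⟩ := hrepup _ _ h (rτ σ)
      exact ⟨rN τ, σ₀', rτ τ, h1.trans (hr σ), hr τ⟩
    · obtain ⟨τ₀', h1, _⟩ := hrepup _ _ h (rτ τ)
      exact ⟨rN σ, rτ σ, τ₀', hr σ, h1.trans (hr τ)⟩
  -- the key lemma : condition (ii) at finite levels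
  have hiiL : ∀ (k N : ℕ) (x : Xf N) (σ₀ : T.obj (Xf N)), L N x ≤ k →
      (∃ x' ∈ T.supp σ₀, x ≤ x') → e N x < θ N σ₀ := by
    intro k
    induction k using Nat.strong_induction_on with
    | _ k ih =>
    intro N x σ₀ hL hx'
    obtain ⟨x', hx'm, hxx'⟩ := hx'
    cases N with
    | zero => exact isEmptyElim x
    | succ M =>
      have hsymm : (θ (M + 1)).symm (e (M + 1) x) = T.map (e M) ((θ M).symm x) := by
        rw [hedef M x, Equiv.symm_apply_apply]
      have hz : ∀ z ∈ T.supp ((θ M).symm x), e M z < x := by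
        intro z hzsup
        have hLz : L M z < L (M + 1) x := by
          rw [hLdef]
          exact Nat.lt_succ_of_le (Finset.le_sup hzsup)
        have h11 := ih (L M z) (lt_of_lt_of_le hLz hL) M z ((θ M).symm x) le_rfl
          ⟨z, hzsup, le_rfl⟩
        rwa [Equiv.apply_symm_apply] at h11
      letI := T.ord (Xf (M + 1))
      rcases lt_trichotomy (T.map (e M) ((θ M).symm x)) σ₀ with hlt | heq | hlt
      · refine (horder (M + 1) (e (M + 1) x) (θ (M + 1) σ₀)).mpr (Or.inl ⟨?_, ?_⟩)
        · rw [hsymm, Equiv.symm_apply_apply]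
          exact hlt
        · intro y hy
          rw [hsymm] at hy
          obtain ⟨z, hzs, rfl⟩ := (T.supp_natural (e M) _ y).mp hy
          have h12 : e M z < x := hz z hzs
          have hLz : L M z < L (M + 1) x := by
            rw [hLdef]
            exact Nat.lt_succ_of_le (Finset.le_sup hzs)
          exact ih (L (M + 1) (e M z)) (by rw [hBH]; exact lt_of_lt_of_le hLz hL)
            (M + 1) (e M z) σ₀ le_rfl ⟨x', hx'm, le_of_lt (lt_of_lt_of_le h12 hxx')⟩
      · exfalso
        rw [← heq] at hx'm
        obtain ⟨z, hzs, hez⟩ := (T.supp_natural (e M) _ x').mp hx'm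
        have h12 : e M z < x := hz z hzs
        rw [hez] at h12
        exact lt_irrefl x (lt_of_le_of_lt hxx' h12)
      · refine (horder (M + 1) (e (M + 1) x) (θ (M + 1) σ₀)).mpr
          (Or.inr ⟨?_, x', ?_, ?_⟩)
        · rw [hsymm, Equiv.symm_apply_apply]
          exact hlt
        · rw [Equiv.symm_apply_apply]
          exact hx'm
        · exact (e (M + 1)).le_iff_le.mpr hxx'
  -- condition (i) for the collapse on B
  have hBi : ∀ σ τ : T.obj B, (T.ord B).lt σ τ →
      (∀ x ∈ T.supp σ, x < j (rN τ + 1) (θ (rN τ) (rτ τ))) →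
      j (rN σ + 1) (θ (rN σ) (rτ σ)) < j (rN τ + 1) (θ (rN τ) (rτ τ)) := by
    intro σ τ hlt hsup
    obtain ⟨N, σ₀, τ₀, hσ, hτ⟩ := hrep2 σ τ
    rw [hϑval τ N τ₀ hτ] at hsup
    rw [hϑval σ N σ₀ hσ, hϑval τ N τ₀ hτ]
    refine (j (N + 1)).strictMono ?_
    refine (horder N (θ N σ₀) (θ N τ₀)).mpr (Or.inl ⟨?_, ?_⟩)
    · simp only [Equiv.symm_apply_apply]
      refine (T.map_lt (j N) σ₀ τ₀).mpr ?_
      rw [hσ, hτ]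
      exact hlt
    · intro z hz0
      simp only [Equiv.symm_apply_apply] at hz0
      have hmem : j N z ∈ T.supp σ := by
        rw [← hσ]
        exact (T.supp_natural (j N) _ (j N z)).mpr ⟨z, hz0, rfl⟩
      have h13 := hsup _ hmem
      rw [← hcomm N z] at h13
      exact (j (N + 1)).lt_iff_lt.mp h13
  -- condition (ii) for the collapse on B
  have hBii : ∀ σ : T.obj B, ∀ x ∈ T.supp σ, x < j (rN σ + 1) (θ (rN σ) (rτ σ)) := by
    intro σ x hx
    rw [← hr σ] at hx
    obtain ⟨x₀, hx₀, rfl⟩ := (T.supp_natural (j (rN σ)) _ x).mp hx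
    have h14 := hiiL (L (rN σ) x₀) (rN σ) x₀ (rτ σ) le_rfl ⟨x₀, hx₀, le_rfl⟩
    calc j (rN σ) x₀ = j (rN σ + 1) (e (rN σ) x₀) := (hcomm _ _).symm
      _ < j (rN σ + 1) (θ (rN σ) (rτ σ)) := (j _).strictMono h14
  refine ⟨main, ?_, ?_⟩
  · intro hwf
    exact ⟨B, inferInstance, fun σ => j (rN σ + 1) (θ (rN σ) (rτ σ)), hBi, hBii, hwf⟩
  · rintro ⟨Y, iY, ϑY, h1, h2, hwf⟩
    obtain ⟨f, hf⟩ := main Y iY ϑY h1 h2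
    exact Subrelation.wf (fun {a b} h => (hf a b).mp h) (InvImage.wf f hwf)
end
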